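/- Let L ∈ ℝ^{m×n} have rank r satisfying the incoherence assumption with parameters μ₁, μ₂, and let J ⊆ [n] be such that C = L(:,J) has rank r. Define β = √(|J|/n) · ‖(V(J,:))†‖₂ where V is the matrix of right singular vectors of L. Then the incoherence parameters of C satisfy μ₁(C) ≤ μ₁(L) and μ₂(C) ≤ β² κ(L)² μ₂(L). -/

import Mathlib

open Matrix BigOperators MeasureTheory

noncomputable def specNorm {m n : ℕ} (A : Matrix (Fin m) (Fin n) ℝ) : ℝ :=
  ‖LinearMap.toContinuousLinearMap (Matrix.toEuclideanLin A)‖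

def IsMPInv {m n : ℕ} (A : Matrix (Fin m) (Fin n) ℝ) (B : Matrix (Fin n) (Fin m) ℝ) : Prop :=
  A * B * A = A ∧ B * A * B = B ∧ (A * B)ᵀ = A * B ∧ (B * A)ᵀ = B * A

noncomputable def rowNorm {m n : ℕ} (A : Matrix (Fin m) (Fin n) ℝ) (i : Fin m) : ℝ :=
  Real.sqrt (∑ j, (A i j) ^ 2)

noncomputable def entryMax {m n : ℕ} (A : Matrix (Fin m) (Fin n) ℝ) : ℝ :=
  ⨆ i, ⨆ j, |A i j|

noncomputable def en {p : ℕ} (x : Fin p → ℝ) : ℝ := Real.sqrt (∑ i, (x i) ^ 2)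

lemma en_nonneg {p : ℕ} (x : Fin p → ℝ) : 0 ≤ en x := Real.sqrt_nonneg _

lemma en_eq_norm {p : ℕ} (x : Fin p → ℝ) :
    en x = ‖(WithLp.equiv 2 (Fin p → ℝ)).symm x‖ := by
  rw [EuclideanSpace.norm_eq]
  simp [en, Real.norm_eq_abs, sq_abs]

lemma specNorm_nonneg {m n : ℕ} (A : Matrix (Fin m) (Fin n) ℝ) : 0 ≤ specNorm A :=
  norm_nonneg _

lemma en_mulVec_le {m n : ℕ} (A : Matrix (Fin m) (Fin n) ℝ) (x : Fin n → ℝ) :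
    en (A *ᵥ x) ≤ specNorm A * en x := by
  rw [en_eq_norm, en_eq_norm]
  have := (LinearMap.toContinuousLinearMap (Matrix.toEuclideanLin A)).le_opNorm
    ((WithLp.equiv 2 (Fin n → ℝ)).symm x)
  simpa [Matrix.toEuclideanLin_apply, specNorm] using this

lemma en_sq {p : ℕ} (x : Fin p → ℝ) : en x ^ 2 = ∑ i, (x i)^2 := by
  rw [en, Real.sq_sqrt]; positivity

lemma dot_self_eq {p : ℕ} (x : Fin p → ℝ) : x ⬝ᵥ x = ∑ i, (x i)^2 := by
  simp [dotProduct, sq]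

lemma dot_le_en_mul_en {p : ℕ} (x y : Fin p → ℝ) : x ⬝ᵥ y ≤ en x * en y := by
  have h := real_inner_le_norm ((WithLp.equiv 2 (Fin p → ℝ)).symm x)
    ((WithLp.equiv 2 (Fin p → ℝ)).symm y)
  rw [en_eq_norm, en_eq_norm]
  refine le_trans (le_of_eq ?_) h
  simp [PiLp.inner_apply, dotProduct, RCLike.inner_apply, mul_comm]

lemma transpose_dot {a b : ℕ} (A : Matrix (Fin a) (Fin b) ℝ) (y : Fin a → ℝ) (x : Fin b → ℝ) :
    (Aᵀ *ᵥ y) ⬝ᵥ x = y ⬝ᵥ (A *ᵥ x) := by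
  rw [Matrix.mulVec_transpose, Matrix.dotProduct_mulVec]

lemma en_transpose_mulVec_le {a b : ℕ} (A : Matrix (Fin a) (Fin b) ℝ) (y : Fin a → ℝ) :
    en (Aᵀ *ᵥ y) ≤ specNorm A * en y := by
  set t := en (Aᵀ *ᵥ y) with ht
  have htn : 0 ≤ t := en_nonneg _
  rcases eq_or_lt_of_le htn with h0 | h0
  · rw [← h0]; exact mul_nonneg (specNorm_nonneg _) (en_nonneg _)
  have h1 : t ^ 2 ≤ (specNorm A * en y) * t := by
    have : t ^ 2 = (Aᵀ *ᵥ y) ⬝ᵥ (Aᵀ *ᵥ y) := by rw [ht, en_sq, dot_self_eq]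
    rw [this, transpose_dot]
    calc y ⬝ᵥ (A *ᵥ (Aᵀ *ᵥ y)) ≤ en y * en (A *ᵥ (Aᵀ *ᵥ y)) := dot_le_en_mul_en _ _
      _ ≤ en y * (specNorm A * t) := by
          exact mul_le_mul_of_nonneg_left (en_mulVec_le A _) (en_nonneg _)
      _ = (specNorm A * en y) * t := by ring
  exact le_of_mul_le_mul_right (by nlinarith) h0

lemma en_isometry {a b : ℕ} (V : Matrix (Fin a) (Fin b) ℝ) (hV : Vᵀ * V = 1)
    (x : Fin b → ℝ) : en (V *ᵥ x) = en x := by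
  have h : en (V *ᵥ x) ^ 2 = en x ^ 2 := by
    rw [en_sq, en_sq, ← dot_self_eq, ← dot_self_eq, ← transpose_dot,
      Matrix.mulVec_mulVec, hV, Matrix.one_mulVec]
  have := en_nonneg (V *ᵥ x); have := en_nonneg x
  nlinarith

lemma en_coisometry {a b : ℕ} (V : Matrix (Fin a) (Fin b) ℝ) (hV : Vᵀ * V = 1)
    (z : Fin a → ℝ) : en (Vᵀ *ᵥ z) ≤ en z := by
  set t := en (Vᵀ *ᵥ z) with ht
  have htn : 0 ≤ t := en_nonneg _
  rcases eq_or_lt_of_le htn with h0 | h0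
  · rw [← h0]; exact en_nonneg _
  have h1 : t ^ 2 ≤ en z * t := by
    have : t ^ 2 = (Vᵀ *ᵥ z) ⬝ᵥ (Vᵀ *ᵥ z) := by rw [ht, en_sq, dot_self_eq]
    rw [this, transpose_dot]
    calc z ⬝ᵥ (V *ᵥ (Vᵀ *ᵥ z)) ≤ en z * en (V *ᵥ (Vᵀ *ᵥ z)) := dot_le_en_mul_en _ _
      _ = en z * t := by rw [en_isometry V hV]
  exact le_of_mul_le_mul_right (by nlinarith) h0

lemma injective_of_full_rank {a b : ℕ} (A : Matrix (Fin a) (Fin b) ℝ) (h : A.rank = b) :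
    Function.Injective A.mulVecLin := by
  rw [← LinearMap.ker_eq_bot]
  have h2 := LinearMap.finrank_range_add_finrank_ker A.mulVecLin
  rw [Matrix.rank] at h
  rw [h] at h2
  simp only [Module.finrank_pi, Fintype.card_fin] at h2
  have : Module.finrank ℝ (LinearMap.ker A.mulVecLin) = 0 := by omega
  exact Submodule.finrank_eq_zero.mp this

lemma left_cancel_of_full_rank {a b c : ℕ} (A : Matrix (Fin a) (Fin b) ℝ)
    (h : A.rank = b) (X Y : Matrix (Fin b) (Fin c) ℝ) (hXY : A * X = A * Y) : X = Y := by
  have hi := injective_of_full_rank A h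
  ext i j
  have : (A * X) *ᵥ Pi.single j 1 = (A * Y) *ᵥ Pi.single j 1 := by rw [hXY]
  rw [← Matrix.mulVec_mulVec, ← Matrix.mulVec_mulVec] at this
  have h2 : X *ᵥ Pi.single j 1 = Y *ᵥ Pi.single j 1 := hi this
  have := congrFun h2 i
  simpa [Matrix.mulVec_single] using this

lemma one_le_kappa {m n : ℕ} (L : Matrix (Fin m) (Fin n) ℝ) (Ld : Matrix (Fin n) (Fin m) ℝ)
    (h : L * Ld * L = L) (hL : L ≠ 0) : 1 ≤ specNorm L * specNorm Ld := by
  obtain ⟨i, j, hij⟩ : ∃ i j, L i j ≠ 0 := by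
    by_contra hc
    push_neg at hc
    exact hL (by ext i j; simpa using hc i j)
  set x : Fin n → ℝ := Pi.single j 1 with hxdef
  have hpos : 0 < en (L *ᵥ x) := by
    rw [en]
    apply Real.sqrt_pos.mpr
    have h1 : (L *ᵥ x) i ^ 2 ≤ ∑ i', (L *ᵥ x) i' ^ 2 :=
      Finset.single_le_sum (f := fun i' => (L *ᵥ x) i' ^ 2)
        (fun _ _ => sq_nonneg _) (Finset.mem_univ i)
    have h2 : (L *ᵥ x) i = L i j := by simp [hxdef, Matrix.mulVec_single]
    rw [h2] at h1
    have h3 : 0 < L i j ^ 2 := by positivity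
    linarith
  have heq : L *ᵥ x = L *ᵥ (Ld *ᵥ (L *ᵥ x)) := by
    rw [Matrix.mulVec_mulVec, Matrix.mulVec_mulVec, h]
  have hb : en (L *ᵥ x) ≤ specNorm L * (specNorm Ld * en (L *ᵥ x)) := by
    calc en (L *ᵥ x) = en (L *ᵥ (Ld *ᵥ (L *ᵥ x))) := by rw [← heq]
      _ ≤ specNorm L * en (Ld *ᵥ (L *ᵥ x)) := en_mulVec_le _ _
      _ ≤ specNorm L * (specNorm Ld * en (L *ᵥ x)) :=
          mul_le_mul_of_nonneg_left (en_mulVec_le _ _) (specNorm_nonneg _)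
  nlinarith [specNorm_nonneg L, specNorm_nonneg Ld]

set_option maxHeartbeats 2000000
theorem stmt5 (m n r k : ℕ) (μ₁ μ₂ : ℝ)
    (L : Matrix (Fin m) (Fin n) ℝ)
    (W : Matrix (Fin m) (Fin r) ℝ) (σ : Fin r → ℝ) (V : Matrix (Fin n) (Fin r) ℝ)
    (hW : Wᵀ * W = 1) (hV : Vᵀ * V = 1) (hσ : ∀ i, 0 < σ i)
    (hL : L = W * Matrix.diagonal σ * Vᵀ)
    (hrank : L.rank = r)
    (hinc1 : ∀ i, rowNorm W i ≤ Real.sqrt (μ₁ * r / m))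
    (hinc2 : ∀ i, rowNorm V i ≤ Real.sqrt (μ₂ * r / n))
    (g : Fin k → Fin n) (hg : Function.Injective g)
    (C : Matrix (Fin m) (Fin k) ℝ) (hC : C = L.submatrix id g)
    (hCrank : C.rank = r)
    (Ld : Matrix (Fin n) (Fin m) ℝ) (hLd : IsMPInv L Ld)
    (VJd : Matrix (Fin r) (Fin k) ℝ) (hVJd : IsMPInv (V.submatrix g id) VJd)
    (β : ℝ) (hβ : β = Real.sqrt ((k : ℝ) / n) * specNorm VJd) :
    ∀ (WC : Matrix (Fin m) (Fin r) ℝ) (σC : Fin r → ℝ) (VC : Matrix (Fin k) (Fin r) ℝ),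
      WCᵀ * WC = 1 → VCᵀ * VC = 1 → (∀ i, 0 < σC i) →
      C = WC * Matrix.diagonal σC * VCᵀ →
      (∀ i, rowNorm WC i ≤ Real.sqrt (μ₁ * r / m)) ∧
      (∀ i, rowNorm VC i ≤
        Real.sqrt (β ^ 2 * (specNorm L * specNorm Ld) ^ 2 * μ₂ * r / k)) := by
  intro WC σC VC hWCo hVCo hσC hC4
  rcases Nat.eq_zero_or_pos r with hr0 | hrpos
  · subst hr0
    constructor <;> intro i <;>
      simp [rowNorm, Real.sqrt_nonneg]
  set D := Matrix.diagonal σ with hD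
  set DC := Matrix.diagonal σC with hDCdef
  set VJ := V.submatrix g id with hVJ
  have hCsub : C = W * D * VJᵀ := by
    rw [hC, hL]
    ext i j
    simp [Matrix.mul_apply, hVJ, Matrix.submatrix_apply]
  set DCi := Matrix.diagonal (fun i => (σC i)⁻¹) with hDCi
  have hDC1 : DC * DCi = 1 := by
    rw [hDCdef, hDCi, Matrix.diagonal_mul_diagonal]
    have hfun : (fun i => σC i * (σC i)⁻¹) = fun _ => (1:ℝ) :=
      funext fun i => mul_inv_cancel₀ (hσC i).ne'
    rw [hfun, Matrix.diagonal_one]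
  -- Part 1
  set Q := D * VJᵀ * VC * DCi with hQdef
  have h1 : C * VC = WC * DC := by
    rw [hC4, Matrix.mul_assoc (WC * DC), hVCo, Matrix.mul_one]
  have hWCeq : WC = W * Q := by
    calc WC = WC * DC * DCi := by rw [Matrix.mul_assoc, hDC1, Matrix.mul_one]
      _ = C * VC * DCi := by rw [← h1]
      _ = W * Q := by rw [hCsub, hQdef]; simp only [Matrix.mul_assoc]
  have hQQ : Qᵀ * Q = 1 := by
    have h2 := hWCo
    rw [hWCeq, Matrix.transpose_mul, Matrix.mul_assoc, ← Matrix.mul_assoc Wᵀ, hW,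
      Matrix.one_mul] at h2
    exact h2
  have hQQ' : Q * Qᵀ = 1 := mul_eq_one_comm.mp hQQ
  have hWWT : WC * WCᵀ = W * Wᵀ := by
    rw [hWCeq, Matrix.transpose_mul, Matrix.mul_assoc, ← Matrix.mul_assoc Q, hQQ',
      Matrix.one_mul]
  have part1 : ∀ i, rowNorm WC i ≤ Real.sqrt (μ₁ * r / m) := by
    intro i
    have hsum : ∑ j, WC i j ^ 2 = ∑ j, W i j ^ 2 := by
      have h3 : (WC * WCᵀ) i i = (W * Wᵀ) i i := by rw [hWWT]
      simpa [Matrix.mul_apply, sq] using h3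
    calc rowNorm WC i = Real.sqrt (∑ j, W i j ^ 2) := by rw [rowNorm, hsum]
      _ ≤ Real.sqrt (μ₁ * r / m) := hinc1 i
  refine ⟨part1, ?_⟩
  -- Part 2
  have hVJrank : VJ.rank = r := by
    have hCT : Cᵀ.rank = r := by rw [Matrix.rank_transpose, hCrank]
    have hCTeq : Cᵀ = VJ * (D * Wᵀ) := by
      rw [hCsub]
      simp only [Matrix.transpose_mul, Matrix.transpose_transpose, hD,
        Matrix.diagonal_transpose, Matrix.mul_assoc]
    have h3 : r ≤ VJ.rank := by
      calc r = Cᵀ.rank := hCT.symm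
        _ = (VJ * (D * Wᵀ)).rank := by rw [hCTeq]
        _ ≤ VJ.rank := Matrix.rank_mul_le_left VJ (D * Wᵀ)
    have h4 := Matrix.rank_le_width VJ
    omega
  have hVJdVJ : VJd * VJ = 1 := by
    apply left_cancel_of_full_rank VJ hVJrank
    rw [Matrix.mul_one, ← Matrix.mul_assoc]
    exact hVJd.1
  set M := D * Wᵀ * WC * DCi with hMdef
  have hVCeq : VC = VJ * M := by
    have h5 : WCᵀ * C = DC * VCᵀ := by
      rw [hC4, ← Matrix.mul_assoc, ← Matrix.mul_assoc, hWCo, Matrix.one_mul]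
    have h6 : VCᵀ = DCi * (WCᵀ * C) := by
      rw [h5, ← Matrix.mul_assoc]
      have hDC2 : DCi * DC = 1 := by
        rw [hDCi, hDCdef, Matrix.diagonal_mul_diagonal]
        have hfun : (fun i => (σC i)⁻¹ * σC i) = fun _ => (1:ℝ) :=
          funext fun i => inv_mul_cancel₀ (hσC i).ne'
        rw [hfun, Matrix.diagonal_one]
      rw [hDC2, Matrix.one_mul]
    have h7 : VC = (DCi * (WCᵀ * C))ᵀ := by rw [← h6, Matrix.transpose_transpose]
    rw [h7, hCsub]
    simp only [Matrix.transpose_mul, Matrix.transpose_transpose, hD, hDCi, hMdef,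
      Matrix.diagonal_transpose, Matrix.mul_assoc]
  have hM : M = VJd * VC := by
    rw [hVCeq, ← Matrix.mul_assoc, hVJdVJ, Matrix.one_mul]
  have hVCT : VCᵀ = VCᵀ * VJdᵀ * VJᵀ := by
    conv_lhs => rw [hVCeq, Matrix.transpose_mul, hM, Matrix.transpose_mul]
  intro i
  have hkey : rowNorm VC i ≤ specNorm VJd * rowNorm V (g i) := by
    have e1 : rowNorm VC i = en (VCᵀ *ᵥ Pi.single i 1) := by
      rw [rowNorm, en]
      congr 1
      apply Finset.sum_congr rfl
      intro j _
      congr 1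
      simp [Matrix.mulVec, dotProduct, Pi.single_apply]
    have e2 : VCᵀ *ᵥ Pi.single i 1 = VCᵀ *ᵥ (VJdᵀ *ᵥ (VJᵀ *ᵥ Pi.single i 1)) := by
      conv_lhs => rw [hVCT]
      rw [Matrix.mulVec_mulVec, Matrix.mulVec_mulVec]
    have e3 : en (VJᵀ *ᵥ Pi.single i 1) = rowNorm V (g i) := by
      rw [en, rowNorm]
      congr 1
      apply Finset.sum_congr rfl
      intro j _
      congr 1
      simp [Matrix.mulVec, dotProduct, Pi.single_apply, hVJ, Matrix.submatrix_apply]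
    calc rowNorm VC i = en (VCᵀ *ᵥ (VJdᵀ *ᵥ (VJᵀ *ᵥ Pi.single i 1))) := by rw [e1, e2]
      _ ≤ en (VJdᵀ *ᵥ (VJᵀ *ᵥ Pi.single i 1)) := en_coisometry VC hVCo _
      _ ≤ specNorm VJd * en (VJᵀ *ᵥ Pi.single i 1) := en_transpose_mulVec_le _ _
      _ = specNorm VJd * rowNorm V (g i) := by rw [e3]
  have hk : (0:ℝ) < k := by exact_mod_cast i.pos
  have hn : (0:ℝ) < n := by exact_mod_cast (g i).pos
  have hLne : L ≠ 0 := by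
    intro h0
    rw [h0, Matrix.rank_zero] at hrank
    omega
  have hκ : 1 ≤ specNorm L * specNorm Ld := one_le_kappa L Ld hLd.1 hLne
  set s := specNorm VJd with hs
  set κ := specNorm L * specNorm Ld with hκdef
  have hsnn : 0 ≤ s := specNorm_nonneg _
  have hβ2 : β ^ 2 = ((k:ℝ)/n) * s ^ 2 := by
    rw [hβ, mul_pow, Real.sq_sqrt (by positivity)]
  have hrhs : β ^ 2 * κ ^ 2 * μ₂ * r / k = κ ^ 2 * (s ^ 2 * (μ₂ * r / n)) := by
    rw [hβ2]
    field_simp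
  calc rowNorm VC i ≤ s * rowNorm V (g i) := hkey
    _ ≤ s * Real.sqrt (μ₂ * r / n) := mul_le_mul_of_nonneg_left (hinc2 _) hsnn
    _ = Real.sqrt (s ^ 2 * (μ₂ * r / n)) := by
        rw [Real.sqrt_mul (sq_nonneg s), Real.sqrt_sq hsnn]
    _ ≤ Real.sqrt (κ ^ 2 * (s ^ 2 * (μ₂ * r / n))) := by
        rcases le_or_gt (μ₂ * r / n) 0 with hle | hlt
        · have ha : s ^ 2 * (μ₂ * r / n) ≤ 0 :=
            mul_nonpos_of_nonneg_of_nonpos (sq_nonneg s) hle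
          have hb : κ ^ 2 * (s ^ 2 * (μ₂ * r / n)) ≤ 0 :=
            mul_nonpos_of_nonneg_of_nonpos (sq_nonneg κ) ha
          rw [Real.sqrt_eq_zero_of_nonpos ha, Real.sqrt_eq_zero_of_nonpos hb]
        · apply Real.sqrt_le_sqrt
          have ha : 0 ≤ s ^ 2 * (μ₂ * r / n) := mul_nonneg (sq_nonneg s) hlt.le
          have hκ2 : 1 ≤ κ ^ 2 := by nlinarith [hκ]
          exact le_mul_of_one_le_left ha hκ2
    _ = Real.sqrt (β ^ 2 * κ ^ 2 * μ₂ * r / k) := by rw [hrhs]
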